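/- arXiv:2003.05886 — 3 statements merged into one kernel-verified Lean document; each statement's English description precedes it below -/
import Mathlib

section
/- Suppose J̄ : ℝ^d × U → ℝ and J̲ : ℝ^d × U' → ℝ satisfy J̲(θ, u̲) ≤ J(θ) ≤ J̄(θ, ū) for all θ, ū, u̲, where J(θ) = inf_{ū} J̄(θ, ū). If the sequences (θ^{(t)}, ū^{(t)}, u̲^{(t)}) satisfy the relaxed generalized MM condition J̄(θ^{(t-1)}, ū^{(t)}) ≤ η J̲(θ^{(t-1)}, u̲^{(t)}) + (1−η) J̄(θ^{(t-2)}, ū^{(t-1)}) with η ∈ (0,1), θ^{(t)} minimizes J̄(·, ū^{(t)}), and J is bounded below, then the gap c_t := J̄(θ^{(t-2)}, ū^{(t-1)}) − J̲(θ^{(t-1)}, u̲^{(t)}) is nonnegative and tends to 0 as t → ∞. -/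
open Filter

/-- ReGeMM: the gap `c t = J̄(θ^{(t-2)}, ū^{(t-1)}) − J̲(θ^{(t-1)}, u̲^{(t)})`
(here reindexed with `t ↦ t + 2`) is nonnegative and tends to `0`. -/
theorem stmt1 {Θ U U' : Type*} (Jub : Θ → U → ℝ) (Jlb : Θ → U' → ℝ) (J : Θ → ℝ)
    (hlow : ∀ θ u', Jlb θ u' ≤ J θ) (hup : ∀ θ u, J θ ≤ Jub θ u)
    (η : ℝ) (hη0 : 0 < η) (hη1 : η < 1)
    (θ : ℕ → Θ) (ub : ℕ → U) (lb : ℕ → U')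
    (hcond : ∀ t : ℕ, Jub (θ (t + 1)) (ub (t + 2)) ≤
      η * Jlb (θ (t + 1)) (lb (t + 2)) + (1 - η) * Jub (θ t) (ub (t + 1)))
    (hmin : ∀ t : ℕ, ∀ θ' : Θ, Jub (θ t) (ub t) ≤ Jub θ' (ub t))
    (hbdd : ∃ B, ∀ θ' : Θ, B ≤ J θ') :
    (∀ t : ℕ, 0 ≤ Jub (θ t) (ub (t + 1)) - Jlb (θ (t + 1)) (lb (t + 2))) ∧
    Tendsto (fun t => Jub (θ t) (ub (t + 1)) - Jlb (θ (t + 1)) (lb (t + 2)))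
      atTop (nhds 0) := by
  obtain ⟨B, hB⟩ := hbdd
  set a : ℕ → ℝ := fun t => Jub (θ t) (ub (t + 1)) with ha
  set c : ℕ → ℝ := fun t => a t - Jlb (θ (t + 1)) (lb (t + 2)) with hc
  have hc0 : ∀ t, 0 ≤ c t := by
    intro t
    have h1 : Jlb (θ (t + 1)) (lb (t + 2)) ≤ J (θ (t + 1)) := hlow _ _
    have h2 : J (θ (t + 1)) ≤ Jub (θ (t + 1)) (ub (t + 1)) := hup _ _
    have h3 : Jub (θ (t + 1)) (ub (t + 1)) ≤ Jub (θ t) (ub (t + 1)) :=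
      hmin (t + 1) (θ t)
    simp only [hc, ha]
    linarith
  have hstep : ∀ t, η * c t ≤ a t - a (t + 1) := by
    intro t
    have h := hcond t
    simp only [hc, ha]
    have : a (t + 1) = Jub (θ (t + 1)) (ub (t + 2)) := rfl
    nlinarith [hc0 t]
  have hanti : Antitone a := by
    apply antitone_nat_of_succ_le
    intro t
    have := hstep t
    nlinarith [hc0 t]
  have hbdd' : BddBelow (Set.range a) := by
    refine ⟨B, ?_⟩
    rintro x ⟨t, rfl⟩
    exact le_trans (hB _) (hup _ _)
  have hconv : Tendsto a atTop (nhds (⨅ t, a t)) :=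
    tendsto_atTop_ciInf hanti hbdd'
  have hconv' : Tendsto (fun t => a (t + 1)) atTop (nhds (⨅ t, a t)) :=
    hconv.comp (tendsto_add_atTop_nat 1)
  have hdiff : Tendsto (fun t => a t - a (t + 1)) atTop (nhds 0) := by
    have := hconv.sub hconv'
    simpa using this
  refine ⟨hc0, ?_⟩
  have hsq : Tendsto c atTop (nhds 0) := by
    have hupper : ∀ t, c t ≤ η⁻¹ * (a t - a (t + 1)) := by
      intro t
      have h := hstep t
      rw [← le_div_iff₀' hη0, div_eq_inv_mul] at h
      exact h
    have hto : Tendsto (fun t => η⁻¹ * (a t - a (t + 1))) atTop (nhds 0) := by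
      have := hdiff.const_mul η⁻¹
      simpa using this
    exact tendsto_of_tendsto_of_tendsto_of_le_of_le tendsto_const_nhds hto
      hc0 hupper
  exact hsq
end

section
/- Suppose J̲(θ, u̲) ≤ J(θ) ≤ J̄(θ, ū) for all θ, ū, u̲, and θ ↦ J̄(θ, ū) has L-Lipschitz gradient for every ū. If (ū^{(t)}, u̲^{(t)}) satisfy the sufficient descent condition J̄(θ^{(t-1)}, ū^{(t)}) − J̲(θ^{(t-1)}, u̲^{(t)}) ≤ (ρ/(2L)) ‖∇_θ J̄(θ^{(t-1)}, ū^{(t)})‖² with ρ ∈ (0,1), and θ^{(t)} = θ^{(t-1)} − (1/L) ∇_θ J̄(θ^{(t-1)}, ū^{(t)}), then J(θ^{(t)}) ≤ J(θ^{(t-1)}) − ((1−ρ)/(2L)) ‖∇_θ J̄(θ^{(t-1)}, ū^{(t)})‖². -/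
open scoped RealInnerProductSpace

lemma descent_lemma {E : Type*} [NormedAddCommGroup E] [InnerProductSpace ℝ E]
    [CompleteSpace E] (f : E → ℝ) (L : ℝ) (hL : 0 < L)
    (hdiff : Differentiable ℝ f)
    (hlip : LipschitzWith (Real.toNNReal L) (gradient f)) (x y : E) :
    f y ≤ f x + ⟪gradient f x, y - x⟫ + L / 2 * ‖y - x‖ ^ 2 := by
  set v := y - x with hv
  set g : ℝ → ℝ := fun t => f (x + t • v) - t * ⟪gradient f x, v⟫ - L * t ^ 2 / 2 * ‖v‖ ^ 2
    with hg
  have hline : ∀ t : ℝ, HasDerivAt (fun t : ℝ => x + t • v) v t := by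
    intro t
    simpa using ((hasDerivAt_id t).smul_const v).const_add x
  have hderiv : ∀ t : ℝ, HasDerivAt g
      (⟪gradient f (x + t • v), v⟫ - ⟪gradient f x, v⟫ - L * t * ‖v‖ ^ 2) t := by
    intro t
    have h1 : HasDerivAt (fun t : ℝ => f (x + t • v)) (⟪gradient f (x + t • v), v⟫) t := by
      have hf := (hdiff (x + t • v)).hasGradientAt.hasFDerivAt
      have := hf.comp_hasDerivAt t (hline t)
      exact this.congr_deriv (by simp)
    have h2 : HasDerivAt (fun t : ℝ => t * ⟪gradient f x, v⟫) (⟪gradient f x, v⟫) t := by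
      simpa using (hasDerivAt_id t).mul_const (⟪gradient f x, v⟫)
    have h3 : HasDerivAt (fun t : ℝ => L * t ^ 2 / 2 * ‖v‖ ^ 2) (L * t * ‖v‖ ^ 2) t := by
      have hp : HasDerivAt (fun t : ℝ => t ^ 2) (2 * t) t := by
        simpa using hasDerivAt_pow 2 t
      have := ((hp.const_mul L).div_const 2).mul_const (‖v‖ ^ 2)
      exact this.congr_deriv (by ring)
    exact (h1.sub h2).sub h3
  have hmono : g 1 ≤ g 0 := by
    have hcont : ContinuousOn g (Set.Icc 0 1) :=
      HasDerivAt.continuousOn fun t _ => hderiv t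
    have hdiffOn : DifferentiableOn ℝ g (interior (Set.Icc (0:ℝ) 1)) :=
      fun t _ => (hderiv t).differentiableAt.differentiableWithinAt
    have hnonpos : ∀ t ∈ interior (Set.Icc (0:ℝ) 1), deriv g t ≤ 0 := by
      intro t ht
      rw [interior_Icc] at ht
      rw [(hderiv t).deriv]
      have hinner : ⟪gradient f (x + t • v) - gradient f x, v⟫ ≤
          ‖gradient f (x + t • v) - gradient f x‖ * ‖v‖ := real_inner_le_norm _ _
      have hlipb : ‖gradient f (x + t • v) - gradient f x‖ ≤ L * (t * ‖v‖) := by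
        have h1 := hlip.dist_le_mul (x + t • v) x
        have h2 : (Real.toNNReal L : ℝ) = L := Real.coe_toNNReal L hL.le
        calc ‖gradient f (x + t • v) - gradient f x‖ ≤ L * ‖x + t • v - x‖ := by
              rw [← h2]; simpa [dist_eq_norm] using h1
          _ = L * (t * ‖v‖) := by
              rw [add_sub_cancel_left, norm_smul, Real.norm_eq_abs, abs_of_pos ht.1]
      have hrw : ⟪gradient f (x + t • v), v⟫ - ⟪gradient f x, v⟫ =
          ⟪gradient f (x + t • v) - gradient f x, v⟫ := by
        rw [inner_sub_left]
      rw [hrw]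
      nlinarith [hinner, hlipb, norm_nonneg v]
    have hanti := antitoneOn_of_deriv_nonpos (convex_Icc 0 1) hcont hdiffOn hnonpos
    exact hanti (Set.left_mem_Icc.2 zero_le_one) (Set.right_mem_Icc.2 zero_le_one) zero_le_one
  have h0 : g 0 = f x := by simp [hg]
  have h1 : g 1 = f y - ⟪gradient f x, v⟫ - L / 2 * ‖v‖ ^ 2 := by
    simp [hg, hv]
  rw [h0, h1] at hmono
  linarith

/-- SuDeMM one-step guarantee: if the duality gap at `θ₀` is at most
`(ρ/(2L)) ‖∇_θ J̄(θ₀, ū)‖²` and `θ₁` is obtained by a gradient step of size `1/L`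
on `J̄(·, ū)`, then `J(θ₁) ≤ J(θ₀) − ((1−ρ)/(2L)) ‖∇_θ J̄(θ₀, ū)‖²`. -/
theorem stmt4 {d : ℕ} {U U' : Type*}
    (Jub : EuclideanSpace ℝ (Fin d) → U → ℝ)
    (Jlb : EuclideanSpace ℝ (Fin d) → U' → ℝ)
    (J : EuclideanSpace ℝ (Fin d) → ℝ)
    (hlow : ∀ θ u', Jlb θ u' ≤ J θ) (hup : ∀ θ u, J θ ≤ Jub θ u)
    (L : ℝ) (hL : 0 < L)
    (hdiff : ∀ u : U, Differentiable ℝ (fun θ => Jub θ u))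
    (hlip : ∀ u : U, LipschitzWith (Real.toNNReal L) (gradient (fun θ => Jub θ u)))
    (ρ : ℝ) (hρ0 : 0 < ρ) (hρ1 : ρ < 1)
    (θ₀ θ₁ : EuclideanSpace ℝ (Fin d)) (u : U) (u' : U')
    (hcond : Jub θ₀ u - Jlb θ₀ u' ≤
      (ρ / (2 * L)) * ‖gradient (fun θ => Jub θ u) θ₀‖ ^ 2)
    (hstep : θ₁ = θ₀ - (1 / L) • gradient (fun θ => Jub θ u) θ₀) :
    J θ₁ ≤ J θ₀ - ((1 - ρ) / (2 * L)) * ‖gradient (fun θ => Jub θ u) θ₀‖ ^ 2 := by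
  set G := gradient (fun θ => Jub θ u) θ₀ with hG
  have hd := descent_lemma (fun θ => Jub θ u) L hL (hdiff u) (hlip u) θ₀ θ₁
  have hsub : θ₁ - θ₀ = -((1 / L) • G) := by rw [hstep]; abel
  have hinner : ⟪G, θ₁ - θ₀⟫ = -(1 / L) * ‖G‖ ^ 2 := by
    rw [hsub, inner_neg_right, real_inner_smul_right, real_inner_self_eq_norm_sq]
    ring
  have hnorm : ‖θ₁ - θ₀‖ ^ 2 = (1 / L) ^ 2 * ‖G‖ ^ 2 := by
    rw [hsub, norm_neg, norm_smul, Real.norm_eq_abs, abs_of_pos (by positivity : (0:ℝ) < 1/L)]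
    ring
  rw [hinner, hnorm] at hd
  have key : -(1 / L) * ‖G‖ ^ 2 + L / 2 * ((1 / L) ^ 2 * ‖G‖ ^ 2)
      = -(1 / (2 * L)) * ‖G‖ ^ 2 := by
    field_simp
    ring
  have h1 : J θ₁ ≤ Jub θ₁ u := hup θ₁ u
  have h2 : Jlb θ₀ u' ≤ J θ₀ := hlow θ₀ u'
  have h3 : ρ / (2 * L) * ‖G‖ ^ 2 - 1 / (2 * L) * ‖G‖ ^ 2
      = -((1 - ρ) / (2 * L)) * ‖G‖ ^ 2 := by ring
  linarith [hd, hcond, h1, h2]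
end

section
/- In the ReGeMM-with-gradient-step setting, if instead of a gradient step each update satisfies the sufficient descent condition J̄(θ^{(t)}; ū^{(t)}) ≤ J̄(θ^{(t-1)}; ū^{(t)}) − (κ/(2L)) ‖∇J̄(θ^{(t-1)}; ū^{(t)})‖² for some κ ∈ (0,1), then c_t ≥ (κ/(2L)) ‖∇J̄(θ^{(t-2)}; ū^{(t-1)})‖² for all t, and c_t → 0 implies the gradients tend to zero. -/
open Filter

/-- ReGeMM with a sufficient-descent update instead of an exact gradient step
(reindexed with `t-1 ↦ t`): the gap `c t` dominates
`(κ/(2L)) ‖∇J̄(θ^{(t)}; ū^{(t+1)})‖²`, so `c t → 0` forces the gradients to 0. -/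
theorem stmt8 {d : ℕ} {U U' : Type*}
    (Jub : EuclideanSpace ℝ (Fin d) → U → ℝ)
    (Jlb : EuclideanSpace ℝ (Fin d) → U' → ℝ)
    (J : EuclideanSpace ℝ (Fin d) → ℝ)
    (hlow : ∀ θ u', Jlb θ u' ≤ J θ) (hup : ∀ θ u, J θ ≤ Jub θ u)
    (L : ℝ) (hL : 0 < L) (η : ℝ) (hη0 : 0 < η) (hη1 : η < 1)
    (κ : ℝ) (hκ0 : 0 < κ) (hκ1 : κ < 1)
    (θ : ℕ → EuclideanSpace ℝ (Fin d)) (ub : ℕ → U) (lb : ℕ → U') (c : ℕ → ℝ)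
    (hc : ∀ t, c t = Jub (θ t) (ub (t + 1)) - Jlb (θ (t + 1)) (lb (t + 2)))
    (hdesc : ∀ t, Jub (θ (t + 1)) (ub (t + 1)) ≤ Jub (θ t) (ub (t + 1)) -
      (κ / (2 * L)) * ‖gradient (fun x => Jub x (ub (t + 1))) (θ t)‖ ^ 2)
    (hcond : ∀ t, Jub (θ (t + 1)) (ub (t + 2)) ≤ Jub (θ t) (ub (t + 1)) - η * c t) :
    (∀ t, (κ / (2 * L)) * ‖gradient (fun x => Jub x (ub (t + 1))) (θ t)‖ ^ 2 ≤ c t) ∧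
    (Tendsto c atTop (nhds 0) →
      Tendsto (fun t => gradient (fun x => Jub x (ub (t + 1))) (θ t)) atTop (nhds 0)) := by
  have hpos : 0 < κ / (2 * L) := div_pos hκ0 (by linarith)
  have key : ∀ t, (κ / (2 * L)) * ‖gradient (fun x => Jub x (ub (t + 1))) (θ t)‖ ^ 2 ≤ c t := by
    intro t
    have h1 := hdesc t
    have h2 := hlow (θ (t + 1)) (lb (t + 2))
    have h3 := hup (θ (t + 1)) (ub (t + 1))
    rw [hc t]
    linarith
  refine ⟨key, fun hct => ?_⟩
  have hnorm : Tendsto (fun t => ‖gradient (fun x => Jub x (ub (t + 1))) (θ t)‖ ^ 2) atTop (nhds 0) := by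
    have hsq : Tendsto (fun t => (κ / (2 * L)) * ‖gradient (fun x => Jub x (ub (t + 1))) (θ t)‖ ^ 2) atTop (nhds 0) :=
      squeeze_zero (fun t => by positivity) key hct
    have h := hsq.const_mul (2 * L / κ)
    rw [mul_zero] at h
    refine h.congr fun t => ?_
    field_simp
  rw [tendsto_zero_iff_norm_tendsto_zero]
  have := hnorm.sqrt
  simpa [Real.sqrt_sq (norm_nonneg _)] using this
end
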